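/- The set B^M(X,Y) of topology bounded M-contraction operators is a closed subset of the normed space B(X,Y): if F_n ∈ B^M(X,Y) converge to F in the norm of B(X,Y), then F satisfies ||F(kx)||_Y ≤ M|k|·||F(x)||_Y for all scalars k ≠ 0 and all x ≠ 0. -/

import Mathlib

open scoped ENNReal NNReal

/-- The (possibly infinite) norm `p(F) = max(sup_{x ≠ 0} ‖F x‖ / ‖x‖, ‖F 0‖)` on maps. -/
noncomputable def pm {X Y : Type*} [NormedAddCommGroup X] [NormedAddCommGroup Y]
    (F : X → Y) : ℝ≥0∞ :=
  max (⨆ x : {x : X // x ≠ 0}, (‖F x.1‖₊ : ℝ≥0∞) / (‖x.1‖₊ : ℝ≥0∞)) (‖F 0‖₊ : ℝ≥0∞)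

lemma pm_bound {X Y : Type*} [NormedAddCommGroup X] [NormedAddCommGroup Y]
    (H : X → Y) (hH : pm H ≠ ⊤) {y : X} (hy : y ≠ 0) :
    ‖H y‖ ≤ (pm H).toReal * ‖y‖ := by
  have h1 : (‖H y‖₊ : ℝ≥0∞) / (‖y‖₊ : ℝ≥0∞) ≤ pm H :=
    le_max_of_le_left
      (le_iSup (fun x : {x : X // x ≠ 0} => (‖H x.1‖₊ : ℝ≥0∞) / (‖x.1‖₊ : ℝ≥0∞)) ⟨y, hy⟩)
  have hy0 : (‖y‖₊ : ℝ≥0∞) ≠ 0 := by simpa using hy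
  have h2 : (‖H y‖₊ : ℝ≥0∞) ≤ pm H * ‖y‖₊ :=
    (ENNReal.div_le_iff hy0 (by simp)).mp h1
  have h3 := ENNReal.toReal_mono (by finiteness) h2
  rw [ENNReal.toReal_mul] at h3
  simpa using h3

/-- `B^M(X,Y)` is closed in `B(X,Y)`: if topology bounded `M`-contraction operators `Fₙ`
converge to `F` in the norm of `B(X,Y)`, then `F` is an `M`-contraction operator. -/
theorem stmt5 {𝕜 X Y : Type*} [RCLike 𝕜] [NormedAddCommGroup X] [NormedSpace 𝕜 X]
    [NormedAddCommGroup Y] [NormedSpace 𝕜 Y]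
    (M : ℝ) (hM : 0 < M) (F : ℕ → X → Y) (G : X → Y)
    (hFB : ∀ n, pm (F n) ≠ ⊤)
    (hFtb : ∀ n, ∀ s : Set X, Bornology.IsBounded s → Bornology.IsBounded (F n '' s))
    (hFc : ∀ n, ∀ k : 𝕜, k ≠ 0 → ∀ x : X, x ≠ 0 → ‖F n (k • x)‖ ≤ M * ‖k‖ * ‖F n x‖)
    (hGB : pm G ≠ ⊤)
    (hconv : Filter.Tendsto (fun n => pm (F n - G)) Filter.atTop (nhds 0)) :
    ∀ k : 𝕜, k ≠ 0 → ∀ x : X, x ≠ 0 → ‖G (k • x)‖ ≤ M * ‖k‖ * ‖G x‖ := by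
  intro k hk x hx
  set e : ℕ → ℝ := fun n => (pm (F n - G)).toReal with he
  have hkx : k • x ≠ 0 := smul_ne_zero hk hx
  -- eventually pm (F n - G) ≠ ⊤
  have hfin : ∀ᶠ n in Filter.atTop, pm (F n - G) ≠ ⊤ := by
    have h1 : ∀ᶠ n in Filter.atTop, pm (F n - G) < 1 :=
      hconv.eventually_lt_const (by norm_num)
    exact h1.mono fun n hn => (hn.trans (by norm_num)).ne
  have hetend : Filter.Tendsto e Filter.atTop (nhds 0) := by
    have := (ENNReal.tendsto_toReal (a := 0) (by simp)).comp hconv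
    simpa [he, Function.comp_def] using this
  have key : ∀ᶠ n in Filter.atTop,
      ‖G (k • x)‖ ≤ M * ‖k‖ * ‖G x‖ + e n * (‖k • x‖ + M * ‖k‖ * ‖x‖) := by
    refine hfin.mono fun n hn => ?_
    have b1 : ‖(F n - G) (k • x)‖ ≤ e n * ‖k • x‖ := pm_bound _ hn hkx
    have b2 : ‖(F n - G) x‖ ≤ e n * ‖x‖ := pm_bound _ hn hx
    simp only [Pi.sub_apply] at b1 b2
    have c1 : ‖F n (k • x)‖ ≤ M * ‖k‖ * ‖F n x‖ := hFc n k hk x hx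
    have c2 : ‖F n x‖ ≤ ‖G x‖ + e n * ‖x‖ :=
      calc ‖F n x‖ ≤ ‖G x‖ + ‖F n x - G x‖ := by
            have := norm_add_le (G x) (F n x - G x); simpa using this
        _ ≤ ‖G x‖ + e n * ‖x‖ := by linarith
    have c3 : ‖G (k • x)‖ ≤ ‖F n (k • x)‖ + ‖F n (k • x) - G (k • x)‖ := by
      have := norm_add_le (F n (k • x)) (G (k • x) - F n (k • x))
      simp only [add_sub_cancel] at this
      rw [← norm_neg (G (k • x) - F n (k • x))] at this
      simpa [neg_sub] using this
    have hMk : 0 ≤ M * ‖k‖ := by positivity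
    nlinarith [norm_nonneg (F n x), mul_le_mul_of_nonneg_left c2 hMk]
  have hlim : Filter.Tendsto
      (fun n => M * ‖k‖ * ‖G x‖ + e n * (‖k • x‖ + M * ‖k‖ * ‖x‖))
      Filter.atTop (nhds (M * ‖k‖ * ‖G x‖)) := by
    have := (hetend.mul_const (‖k • x‖ + M * ‖k‖ * ‖x‖)).const_add (M * ‖k‖ * ‖G x‖)
    simpa using this
  exact ge_of_tendsto hlim key
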